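/- If a solution of the system Xᵢ' = Xᵢ(𝓖 − 1) + λᵢYᵢ²/√dᵢ, Yᵢ' = Yᵢ(𝓖 − Xᵢ/√dᵢ) (with 𝓖 = ∑ⱼXⱼ²) satisfies 𝓛(s₀) = 0 and 𝓗(s₀) = 1 at some time s₀, then 𝓛(s) = 0 and 𝓗(s) = 1 for all s in the interval of existence. -/

import Mathlib

open Finset

lemma aux_vanish (a b s₀ : ℝ) (hs₀ : s₀ ∈ Set.Ioo a b) (f g : ℝ → ℝ)
    (hg : ContinuousOn g (Set.Ioo a b))
    (hf : ∀ s ∈ Set.Ioo a b, HasDerivAt f (g s * f s) s)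
    (h0 : f s₀ = 0) : ∀ s ∈ Set.Ioo a b, f s = 0 := by
  set Φ : ℝ → ℝ := fun s => ∫ t in s₀..s, g t with hΦdef
  have hΦd : ∀ s ∈ Set.Ioo a b, HasDerivAt Φ (g s) s := by
    intro s hs
    have hsub : Set.uIcc s₀ s ⊆ Set.Ioo a b :=
      (Set.ordConnected_Ioo).uIcc_subset hs₀ hs
    exact intervalIntegral.integral_hasDerivAt_right
      ((hg.mono hsub).intervalIntegrable)
      (hg.stronglyMeasurableAtFilter isOpen_Ioo s hs)
      (hg.continuousAt (isOpen_Ioo.mem_nhds hs))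
  set F : ℝ → ℝ := fun s => f s * Real.exp (-Φ s) with hFdef
  have hFd : ∀ s ∈ Set.Ioo a b, HasDerivAt F 0 s := by
    intro s hs
    have : HasDerivAt F _ s := (hf s hs).fun_mul (((hΦd s hs).fun_neg).exp)
    convert this using 1
    ring
  have hFc : ContinuousOn F (Set.Ioo a b) := fun s hs => ((hFd s hs).continuousAt).continuousWithinAt
  have hFdiff : DifferentiableOn ℝ F (interior (Set.Ioo a b)) := by
    rw [interior_Ioo]
    exact fun s hs => ((hFd s hs).differentiableAt).differentiableWithinAt
  have hderiv0 : ∀ s ∈ interior (Set.Ioo a b), deriv F s = 0 := by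
    rw [interior_Ioo]; exact fun s hs => (hFd s hs).deriv
  have hmono : MonotoneOn F (Set.Ioo a b) :=
    monotoneOn_of_deriv_nonneg (convex_Ioo a b) hFc hFdiff (fun s hs => (hderiv0 s hs).ge)
  have hanti : AntitoneOn F (Set.Ioo a b) :=
    antitoneOn_of_deriv_nonpos (convex_Ioo a b) hFc hFdiff (fun s hs => (hderiv0 s hs).le)
  intro s hs
  have hconst : F s = F s₀ := by
    rcases le_total s s₀ with h | h
    · exact le_antisymm (hmono hs hs₀ h) (hanti hs hs₀ h)
    · exact le_antisymm (hanti hs₀ hs h) (hmono hs₀ hs h)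
  have : f s * Real.exp (-Φ s) = 0 := by
    rw [hFdef] at hconst; simp only at hconst
    rw [hconst, h0, zero_mul]
  exact (mul_eq_zero.mp this).resolve_right (Real.exp_ne_zero _)

/-- The locus `{𝓛 = 0, 𝓗 = 1}` is invariant under the flow of the soliton subsystem. -/
theorem stmt_3 (r : ℕ) (d lam : Fin r → ℝ) (hd : ∀ i, 0 < d i)
    (a b s₀ : ℝ) (hs₀ : s₀ ∈ Set.Ioo a b)
    (X Y : ℝ → Fin r → ℝ)
    (hX : ∀ i, ∀ s ∈ Set.Ioo a b, HasDerivAt (fun s => X s i)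
      (X s i * ((∑ j, (X s j) ^ 2) - 1) + lam i * (Y s i) ^ 2 / Real.sqrt (d i)) s)
    (hY : ∀ i, ∀ s ∈ Set.Ioo a b, HasDerivAt (fun s => Y s i)
      (Y s i * ((∑ j, (X s j) ^ 2) - X s i / Real.sqrt (d i))) s)
    (hL0 : (∑ i, ((X s₀ i) ^ 2 + lam i * (Y s₀ i) ^ 2)) - 1 = 0)
    (hH0 : (∑ i, Real.sqrt (d i) * X s₀ i) = 1) :
    ∀ s ∈ Set.Ioo a b,
      (∑ i, ((X s i) ^ 2 + lam i * (Y s i) ^ 2)) - 1 = 0 ∧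
      (∑ i, Real.sqrt (d i) * X s i) = 1 := by
  set G : ℝ → ℝ := fun s => ∑ j, (X s j) ^ 2 with hGdef
  set L : ℝ → ℝ := fun s => (∑ i, ((X s i) ^ 2 + lam i * (Y s i) ^ 2)) - 1 with hLdef
  set H : ℝ → ℝ := fun s => (∑ i, Real.sqrt (d i) * X s i) - 1 with hHdef
  have hGc : ContinuousOn G (Set.Ioo a b) :=
    continuousOn_finset_sum _ fun j _ s hs =>
      (((hX j s hs).continuousAt).pow 2).continuousWithinAt
  -- derivative of L
  have hLd : ∀ s ∈ Set.Ioo a b, HasDerivAt L (2 * G s * L s) s := by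
    intro s hs
    have h1 : HasDerivAt L
        (∑ i, (2 * X s i ^ 1 * (X s i * (G s - 1) + lam i * (Y s i) ^ 2 / Real.sqrt (d i))
          + lam i * (2 * Y s i ^ 1 * (Y s i * (G s - X s i / Real.sqrt (d i)))))) s := by
      apply HasDerivAt.sub_const
      apply HasDerivAt.fun_sum
      intro i _
      exact ((hX i s hs).pow 2).add (((hY i s hs).pow 2).const_mul (lam i))
    convert h1 using 1
    have hterm : ∀ i : Fin r,
        2 * X s i ^ 1 * (X s i * (G s - 1) + lam i * (Y s i) ^ 2 / Real.sqrt (d i))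
          + lam i * (2 * Y s i ^ 1 * (Y s i * (G s - X s i / Real.sqrt (d i))))
        = 2 * (G s - 1) * (X s i) ^ 2 + 2 * G s * (lam i * (Y s i) ^ 2) := by
      intro i; ring
    rw [Finset.sum_congr rfl fun i _ => hterm i, Finset.sum_add_distrib,
      ← Finset.mul_sum, ← Finset.mul_sum]
    have hsplit : (∑ i, ((X s i) ^ 2 + lam i * (Y s i) ^ 2))
        = G s + ∑ i, lam i * (Y s i) ^ 2 := by
      rw [hGdef, Finset.sum_add_distrib]
    rw [hLdef]
    simp only [hsplit]
    ring
  have hLzero : ∀ s ∈ Set.Ioo a b, L s = 0 :=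
    aux_vanish a b s₀ hs₀ L (fun s => 2 * G s)
      (ContinuousOn.mul continuousOn_const hGc) hLd hL0
  -- derivative of H
  have hHd : ∀ s ∈ Set.Ioo a b, HasDerivAt H ((G s - 1) * H s) s := by
    intro s hs
    have h1 : HasDerivAt H
        (∑ i, Real.sqrt (d i) *
          (X s i * (G s - 1) + lam i * (Y s i) ^ 2 / Real.sqrt (d i))) s := by
      apply HasDerivAt.sub_const
      apply HasDerivAt.fun_sum
      intro i _
      exact (hX i s hs).const_mul _
    convert h1 using 1
    have hterm : ∀ i : Fin r,
        Real.sqrt (d i) * (X s i * (G s - 1) + lam i * (Y s i) ^ 2 / Real.sqrt (d i))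
        = (G s - 1) * (Real.sqrt (d i) * X s i) + lam i * (Y s i) ^ 2 := by
      intro i
      have hne : Real.sqrt (d i) ≠ 0 := (Real.sqrt_pos.mpr (hd i)).ne'
      field_simp
    rw [Finset.sum_congr rfl fun i _ => hterm i, Finset.sum_add_distrib, ← Finset.mul_sum]
    have hsum : ∑ i, lam i * (Y s i) ^ 2 = 1 - G s := by
      have := hLzero s hs
      rw [hLdef] at this
      simp only at this
      have h2 : (∑ i, ((X s i) ^ 2 + lam i * (Y s i) ^ 2))
          = G s + ∑ i, lam i * (Y s i) ^ 2 := by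
        rw [hGdef, Finset.sum_add_distrib]
      rw [h2] at this
      linarith
    rw [hsum, hHdef]
    ring
  have hHzero : ∀ s ∈ Set.Ioo a b, H s = 0 :=
    aux_vanish a b s₀ hs₀ H (fun s => G s - 1)
      (ContinuousOn.sub hGc continuousOn_const)
      (fun s hs => by simpa [mul_comm] using hHd s hs)
      (by rw [hHdef]; simp only; rw [hH0]; ring)
  intro s hs
  refine ⟨hLzero s hs, ?_⟩
  have := hHzero s hs
  rw [hHdef] at this
  simp only at this
  linarith
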